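/- arXiv:2011.13780 — 2 statements merged into one kernel-verified Lean document; each statement's English description precedes it below -/
import Mathlib

section
/- Let T be a bounded linear operator on a Banach space B with ‖T^j‖ ≤ M e^{ωj/n} for all j, and let k ∈ ℕ. Then for any f ∈ B, ‖e^{k(T−I)} f − T^k f‖ ≤ M e^{ω(k−1)/n} e^{k(e^{ω/n}−1)} √(k²(e^{ω/n}−1)² + k e^{ω/n}) · ‖(T−I) f‖. -/
open NormedSpace

private lemma chern_expser (x : ℝ) : ∑' j : ℕ, x ^ j / j.factorial = Real.exp x := by
  rw [Real.exp_eq_exp_ℝ, NormedSpace.exp_eq_tsum_div]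

private lemma chern_sumE1 (x : ℝ) : Summable (fun j : ℕ => (j : ℝ) * x ^ j / j.factorial) := by
  rw [← summable_nat_add_iff 1]
  have : (fun j : ℕ => ((j+1 : ℕ) : ℝ) * x ^ (j+1) / (j+1).factorial)
      = fun j : ℕ => x * (x ^ j / j.factorial) := by
    funext j; rw [Nat.factorial_succ]; push_cast; field_simp; ring
  rw [this]
  exact (Real.summable_pow_div_factorial x).mul_left x

private lemma chern_tsumE1 (x : ℝ) :
    ∑' j : ℕ, (j : ℝ) * x ^ j / j.factorial = x * Real.exp x := by
  rw [Summable.tsum_eq_zero_add (chern_sumE1 x)]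
  simp only [Nat.cast_zero]
  push_cast
  rw [show (fun j : ℕ => ((j:ℝ)+1) * x ^ (j+1) / (j+1).factorial)
      = fun j : ℕ => x * (x ^ j / j.factorial) by
    funext j; rw [Nat.factorial_succ]; push_cast; field_simp; ring]
  rw [tsum_mul_left, chern_expser]
  ring

private lemma chern_sumE2' (x : ℝ) :
    Summable (fun j : ℕ => (j : ℝ) * ((j:ℝ)-1) * x ^ j / j.factorial) := by
  rw [← summable_nat_add_iff 2]
  have : (fun j : ℕ => ((j+2 : ℕ) : ℝ) * (((j+2:ℕ):ℝ)-1) * x ^ (j+2) / (j+2).factorial)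
      = fun j : ℕ => x^2 * (x ^ j / j.factorial) := by
    funext j; rw [Nat.factorial_succ, Nat.factorial_succ]; push_cast; field_simp; ring
  rw [this]
  exact (Real.summable_pow_div_factorial x).mul_left _

private lemma chern_tsumE2' (x : ℝ) :
    ∑' j : ℕ, (j : ℝ) * ((j:ℝ)-1) * x ^ j / j.factorial = x^2 * Real.exp x := by
  rw [Summable.tsum_eq_zero_add (chern_sumE2' x),
    Summable.tsum_eq_zero_add ((summable_nat_add_iff 1).mpr (chern_sumE2' x))]
  push_cast
  norm_num
  rw [show (fun j : ℕ => ((j:ℝ)+1+1) * ((j:ℝ)+1) * x ^ (j+1+1) / (j+1+1).factorial)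
      = fun j : ℕ => x^2 * (x ^ j / j.factorial) by
    funext j; rw [Nat.factorial_succ, Nat.factorial_succ]; push_cast; field_simp; ring]
  rw [tsum_mul_left, chern_expser]

private lemma chern_Wdecomp (x : ℝ) (k : ℕ) :
    (fun j : ℕ => ((j:ℝ)-k)^2 * x ^ j / j.factorial)
      = fun j : ℕ => (j:ℝ) * ((j:ℝ)-1) * x ^ j / j.factorial
        + ((1 - 2*(k:ℝ)) * ((j:ℝ) * x ^ j / j.factorial)
          + (k:ℝ)^2 * (x ^ j / j.factorial)) := by
  funext j; ring

private lemma chern_sumW (x : ℝ) (k : ℕ) :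
    Summable (fun j : ℕ => ((j:ℝ)-k)^2 * x ^ j / j.factorial) := by
  rw [chern_Wdecomp]
  exact (chern_sumE2' x).add (((chern_sumE1 x).mul_left _).add
    ((Real.summable_pow_div_factorial x).mul_left _))

private lemma chern_tsumW (x : ℝ) (k : ℕ) :
    ∑' j : ℕ, ((j:ℝ)-k)^2 * x ^ j / j.factorial = ((x - k)^2 + x) * Real.exp x := by
  rw [chern_Wdecomp,
    Summable.tsum_add (chern_sumE2' x) (((chern_sumE1 x).mul_left _).add
      ((Real.summable_pow_div_factorial x).mul_left _)),
    Summable.tsum_add ((chern_sumE1 x).mul_left _) ((Real.summable_pow_div_factorial x).mul_left _),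
    tsum_mul_left, tsum_mul_left, chern_tsumE2', chern_tsumE1, chern_expser]
  ring

section OpLemmas
variable {B : Type*} [NormedAddCommGroup B] [NormedSpace ℝ B]

private lemma chern_tele (T : B →L[ℝ] B) (M ω : ℝ) (n : ℕ)
    (hM : 1 ≤ M) (hω : 0 ≤ ω) (hn : 0 < n)
    (hT : ∀ j : ℕ, ‖T ^ j‖ ≤ M * Real.exp (ω * j / n)) (f : B) :
    ∀ (d a : ℕ), ‖(T ^ (a + d)) f - (T ^ a) f‖ ≤
      d * (M * Real.exp (ω * ((a:ℝ) + d - 1) / n)) * ‖(T - 1) f‖ := by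
  intro d
  induction d with
  | zero => intro a; simp
  | succ d ih =>
    intro a
    have hn' : (0:ℝ) < n := by exact_mod_cast hn
    have step : ‖(T ^ (a + d + 1)) f - (T ^ (a + d)) f‖ ≤
        M * Real.exp (ω * ((a:ℝ) + d) / n) * ‖(T - 1) f‖ := by
      have h1 : (T ^ (a + d + 1)) f - (T ^ (a + d)) f = (T ^ (a + d)) ((T - 1) f) := by
        rw [pow_succ, ContinuousLinearMap.mul_apply]
        simp [ContinuousLinearMap.sub_apply, map_sub]
      rw [h1]
      calc ‖(T ^ (a + d)) ((T - 1) f)‖ ≤ ‖T ^ (a + d)‖ * ‖(T - 1) f‖ :=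
            (T ^ (a + d)).le_opNorm _
        _ ≤ M * Real.exp (ω * ((a:ℝ) + d) / n) * ‖(T - 1) f‖ := by
            apply mul_le_mul_of_nonneg_right _ (norm_nonneg _)
            have := hT (a + d)
            push_cast at this
            exact this
    have mono : Real.exp (ω * ((a:ℝ) + d - 1) / n) ≤ Real.exp (ω * ((a:ℝ) + d) / n) := by
      apply Real.exp_le_exp.mpr
      gcongr
      linarith
    have h2 : (d:ℝ) * (M * Real.exp (ω * ((a:ℝ) + d - 1) / n)) * ‖(T - 1) f‖ ≤
        (d:ℝ) * (M * Real.exp (ω * ((a:ℝ) + d) / n)) * ‖(T - 1) f‖ := by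
      apply mul_le_mul_of_nonneg_right _ (norm_nonneg _)
      apply mul_le_mul_of_nonneg_left _ (Nat.cast_nonneg d)
      exact mul_le_mul_of_nonneg_left mono (by linarith)
    have hcast : (a:ℝ) + ((d:ℕ)+1 : ℕ) - 1 = (a:ℝ) + d := by push_cast; ring
    calc ‖(T ^ (a + (d + 1))) f - (T ^ a) f‖
        ≤ ‖(T ^ (a + d + 1)) f - (T ^ (a + d)) f‖ + ‖(T ^ (a + d)) f - (T ^ a) f‖ := by
          rw [show a + (d + 1) = a + d + 1 by ring]
          exact norm_sub_le_norm_sub_add_norm_sub _ _ _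
      _ ≤ M * Real.exp (ω * ((a:ℝ) + d) / n) * ‖(T - 1) f‖
          + (d:ℝ) * (M * Real.exp (ω * ((a:ℝ) + d) / n)) * ‖(T - 1) f‖ :=
          add_le_add step ((ih a).trans h2)
      _ = ((d + 1 : ℕ):ℝ) * (M * Real.exp (ω * ((a:ℝ) + ((d:ℕ)+1:ℕ) - 1) / n)) * ‖(T - 1) f‖ := by
          rw [hcast]; push_cast; ring

private lemma chern_diffb (T : B →L[ℝ] B) (M ω : ℝ) (n : ℕ)
    (hM : 1 ≤ M) (hω : 0 ≤ ω) (hn : 0 < n)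
    (hT : ∀ j : ℕ, ‖T ^ j‖ ≤ M * Real.exp (ω * j / n)) (f : B) (k j : ℕ) :
    ‖(T ^ j) f - (T ^ k) f‖ ≤
      |(j:ℝ) - k| * (M * Real.exp (ω * ((k:ℝ) - 1) / n) * Real.exp (ω / n) ^ j) *
        ‖(T - 1) f‖ := by
  have hn' : (0:ℝ) < n := by exact_mod_cast hn
  have hq : Real.exp (ω / n) ^ j = Real.exp (ω * j / n) := by
    rw [← Real.exp_nat_mul]
    congr 1
    field_simp
  rcases le_or_gt k j with h | h
  · obtain ⟨d, rfl⟩ : ∃ d, j = k + d := ⟨j - k, by omega⟩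
    have habs : |((k + d : ℕ):ℝ) - k| = (d:ℝ) := by
      push_cast; rw [abs_of_nonneg] <;> [ring; linarith [Nat.cast_nonneg (α := ℝ) d]]
    refine (chern_tele T M ω n hM hω hn hT f d k).trans ?_
    rw [habs, hq]
    apply mul_le_mul_of_nonneg_right _ (norm_nonneg _)
    apply mul_le_mul_of_nonneg_left _ (Nat.cast_nonneg d)
    have heq : M * Real.exp (ω * ((k:ℝ) - 1) / n) * Real.exp (ω * ((k + d:ℕ):ℝ) / n)
        = M * Real.exp ((ω * ((k:ℝ) - 1) + ω * ((k + d:ℕ):ℝ)) / n) := by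
      rw [mul_assoc, ← Real.exp_add, ← add_div]
    rw [heq]
    apply mul_le_mul_of_nonneg_left _ (by linarith)
    apply Real.exp_le_exp.mpr
    gcongr
    push_cast
    nlinarith
  · obtain ⟨d, rfl⟩ : ∃ d, k = j + d := ⟨k - j, by omega⟩
    have habs : |(j:ℝ) - ((j + d : ℕ):ℝ)| = (d:ℝ) := by
      push_cast; rw [abs_of_nonpos] <;> [ring; linarith [Nat.cast_nonneg (α := ℝ) d]]
    rw [norm_sub_rev]
    refine (chern_tele T M ω n hM hω hn hT f d j).trans ?_
    rw [habs, hq]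
    apply mul_le_mul_of_nonneg_right _ (norm_nonneg _)
    apply mul_le_mul_of_nonneg_left _ (Nat.cast_nonneg d)
    have h1 : (1:ℝ) ≤ Real.exp (ω * j / n) := by
      rw [Real.one_le_exp_iff]
      positivity
    have hcast : ω * ((j:ℝ) + d - 1) / n = ω * (((j + d : ℕ):ℝ) - 1) / n := by push_cast; ring
    rw [hcast]
    have hME : 0 ≤ M * Real.exp (ω * (((j + d : ℕ):ℝ) - 1) / n) := by positivity
    nlinarith [hME, h1]

set_option synthInstance.maxHeartbeats 1000000 in
private lemma chern_expdecomp [CompleteSpace B] (T : B →L[ℝ] B) (k : ℕ) (f : B) :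
    NormedSpace.exp ((k:ℝ) • (T - 1)) f
      = ∑' j : ℕ, (Real.exp (-(k:ℝ)) * ((k:ℝ) ^ j / j.factorial)) • (T ^ j) f := by
  have h1 : (k:ℝ) • (T - 1) = (k:ℝ) • T + (-(k:ℝ)) • (1 : B →L[ℝ] B) := by
    rw [smul_sub, sub_eq_add_neg, neg_smul]
  have hcomm : Commute ((k:ℝ) • T) ((-(k:ℝ)) • (1 : B →L[ℝ] B)) :=
    ((Commute.one_right T).smul_left _).smul_right _
  have h2 : NormedSpace.exp ((-(k:ℝ)) • (1 : B →L[ℝ] B)) = Real.exp (-(k:ℝ)) • 1 := by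
    rw [← Algebra.algebraMap_eq_smul_one, ← NormedSpace.algebraMap_exp_comm,
      ← Real.exp_eq_exp_ℝ, Algebra.algebraMap_eq_smul_one]
  rw [h1, NormedSpace.exp_add_of_commute_of_mem_ball (𝕂 := ℝ) hcomm
    ((NormedSpace.expSeries_radius_eq_top ℝ (B →L[ℝ] B)).symm ▸ edist_lt_top _ _)
    ((NormedSpace.expSeries_radius_eq_top ℝ (B →L[ℝ] B)).symm ▸ edist_lt_top _ _), h2, mul_smul_comm, mul_one]
  rw [ContinuousLinearMap.smul_apply]
  rw [NormedSpace.exp_eq_tsum ℝ]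
  have hsum : Summable fun j : ℕ => ((j.factorial:ℝ)⁻¹) • ((k:ℝ) • T) ^ j :=
    NormedSpace.expSeries_summable' (𝕂 := ℝ) ((k:ℝ) • T)
  have h3 : (∑' j : ℕ, ((j.factorial:ℝ)⁻¹) • ((k:ℝ) • T) ^ j) f
      = ∑' j : ℕ, (((j.factorial:ℝ)⁻¹) • ((k:ℝ) • T) ^ j) f :=
    (ContinuousLinearMap.apply ℝ B f).map_tsum hsum
  have hsum2 : Summable fun j : ℕ => (((j.factorial:ℝ)⁻¹) • ((k:ℝ) • T) ^ j) f :=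
    hsum.map (ContinuousLinearMap.apply ℝ B f) (ContinuousLinearMap.apply ℝ B f).continuous
  rw [h3, ← Summable.tsum_const_smul _ hsum2]
  congr 1
  funext j
  rw [smul_pow]
  simp only [ContinuousLinearMap.smul_apply, smul_smul]
  congr 1
  field_simp

set_option synthInstance.maxHeartbeats 1000000 in
private lemma chern_sumTf [CompleteSpace B] (T : B →L[ℝ] B) (k : ℕ) (f : B) :
    Summable (fun j : ℕ => (((k:ℝ) ^ j / j.factorial)) • (T ^ j) f) := by
  have hsum : Summable fun j : ℕ => ((j.factorial:ℝ)⁻¹) • ((k:ℝ) • T) ^ j :=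
    NormedSpace.expSeries_summable' (𝕂 := ℝ) ((k:ℝ) • T)
  have hsum2 : Summable fun j : ℕ => (((j.factorial:ℝ)⁻¹) • ((k:ℝ) • T) ^ j) f :=
    hsum.map (ContinuousLinearMap.apply ℝ B f) (ContinuousLinearMap.apply ℝ B f).continuous
  refine (summable_congr ?_).mp hsum2
  intro j
  rw [smul_pow]
  simp only [ContinuousLinearMap.smul_apply, smul_smul]
  congr 1
  field_simp

end OpLemmas

private lemma chern_absle (x a : ℝ) (ha : 0 < a) : |x| ≤ x^2/(2*a) + a/2 := by
  rw [div_add_div _ _ (by positivity : (2*a:ℝ) ≠ 0) (two_ne_zero), le_div_iff₀ (by positivity)]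
  nlinarith [sq_abs x, sq_nonneg (|x| - a)]

theorem chernoff_type_estimate
    (B : Type*) [NormedAddCommGroup B] [NormedSpace ℝ B] [CompleteSpace B]
    (T : B →L[ℝ] B) (M ω : ℝ) (hM : 1 ≤ M) (hω : 0 ≤ ω) (n : ℕ) (hn : 0 < n)
    (hT : ∀ j : ℕ, ‖T ^ j‖ ≤ M * Real.exp (ω * j / n)) (k : ℕ) :
    ∀ f : B,
      ‖NormedSpace.exp ((k : ℝ) • (T - 1)) f - (T ^ k) f‖ ≤
        M * Real.exp (ω * ((k : ℝ) - 1) / n) * Real.exp ((k : ℝ) * (Real.exp (ω / n) - 1)) *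
          Real.sqrt ((k : ℝ) ^ 2 * (Real.exp (ω / n) - 1) ^ 2 + (k : ℝ) * Real.exp (ω / n)) *
          ‖(T - 1) f‖ := by
  intro f
  have hn' : (0:ℝ) < n := by exact_mod_cast hn
  by_cases hk : k = 0
  · subst hk
    simp only [Nat.cast_zero, zero_smul, NormedSpace.exp_zero, pow_zero]
    rw [sub_self, norm_zero]
    have h1 : 0 ≤ Real.sqrt ((0:ℝ) ^ 2 * (Real.exp (ω / n) - 1) ^ 2 + (0:ℝ) * Real.exp (ω / n)) :=
      Real.sqrt_nonneg _
    have h2 : (0:ℝ) < Real.exp (ω * ((0:ℝ) - 1) / n) := Real.exp_pos _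
    have h3 : (0:ℝ) < Real.exp ((0:ℝ) * (Real.exp (ω / n) - 1)) := Real.exp_pos _
    positivity
  -- main case
  have hk1 : (1:ℝ) ≤ k := by exact_mod_cast Nat.one_le_iff_ne_zero.mpr hk
  set q : ℝ := Real.exp (ω / n) with hqdef
  have hq1 : 1 ≤ q := Real.one_le_exp (by positivity)
  set S : ℝ := (k:ℝ) ^ 2 * (q - 1) ^ 2 + (k:ℝ) * q with hSdef
  have hS1 : (1:ℝ) ≤ S := by nlinarith
  have hS0 : (0:ℝ) ≤ S := by linarith
  set rs : ℝ := Real.sqrt S with hrsdef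
  have hrs : 0 < rs := Real.sqrt_pos.mpr (by linarith)
  have hrsS : rs * rs = S := Real.mul_self_sqrt hS0
  set N : ℝ := ‖(T - 1) f‖ with hNdef
  have hN : 0 ≤ N := norm_nonneg _
  set E : ℝ := Real.exp (ω * ((k:ℝ) - 1) / n) with hEdef
  have hE : 0 < E := Real.exp_pos _
  set C : ℝ := M * E * N with hCdef
  have hC : 0 ≤ C := by positivity
  set lam : ℝ := (k:ℝ) * q with hlamdef
  -- summability facts
  have hsumc : Summable (fun j : ℕ => Real.exp (-(k:ℝ)) * ((k:ℝ) ^ j / j.factorial)) :=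
    (Real.summable_pow_div_factorial (k:ℝ)).mul_left _
  have hsum1 : Summable (fun j : ℕ =>
      (Real.exp (-(k:ℝ)) * ((k:ℝ) ^ j / j.factorial)) • (T ^ j) f) := by
    refine (summable_congr (fun j => ?_)).mpr ((chern_sumTf T k f).const_smul (Real.exp (-(k:ℝ))))
    rw [smul_smul]
  have hsum2 : Summable (fun j : ℕ =>
      (Real.exp (-(k:ℝ)) * ((k:ℝ) ^ j / j.factorial)) • (T ^ k) f) :=
    hsumc.smul_const _
  -- splitting
  have hceq : ∑' j : ℕ, Real.exp (-(k:ℝ)) * ((k:ℝ) ^ j / j.factorial) = 1 := by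
    rw [tsum_mul_left, chern_expser, ← Real.exp_add]
    simp
  have hTk : (T ^ k) f
      = ∑' j : ℕ, (Real.exp (-(k:ℝ)) * ((k:ℝ) ^ j / j.factorial)) • (T ^ k) f := by
    rw [Summable.tsum_smul_const hsumc, hceq, one_smul]
  have hsplit : NormedSpace.exp ((k:ℝ) • (T - 1)) f - (T ^ k) f
      = ∑' j : ℕ, (Real.exp (-(k:ℝ)) * ((k:ℝ) ^ j / j.factorial)) •
          ((T ^ j) f - (T ^ k) f) := by
    have hsub : ∑' j : ℕ, (Real.exp (-(k:ℝ)) * ((k:ℝ) ^ j / j.factorial)) •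
          ((T ^ j) f - (T ^ k) f)
        = (∑' j : ℕ, (Real.exp (-(k:ℝ)) * ((k:ℝ) ^ j / j.factorial)) • (T ^ j) f)
          - ∑' j : ℕ, (Real.exp (-(k:ℝ)) * ((k:ℝ) ^ j / j.factorial)) • (T ^ k) f := by
      rw [← Summable.tsum_sub hsum1 hsum2]
      congr 1
      funext j
      rw [smul_sub]
    rw [chern_expdecomp T k f, hsub, Summable.tsum_smul_const hsumc, hceq, one_smul]
  -- majorant
  set u : ℕ → ℝ := fun j =>
    (C * Real.exp (-(k:ℝ)) / (2 * rs)) * (((j:ℝ) - k) ^ 2 * lam ^ j / j.factorial)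
      + (C * Real.exp (-(k:ℝ)) * rs / 2) * (lam ^ j / j.factorial) with hudef
  have hsumu : Summable u :=
    ((chern_sumW lam k).mul_left _).add ((Real.summable_pow_div_factorial lam).mul_left _)
  have hpt : ∀ j : ℕ,
      ‖(Real.exp (-(k:ℝ)) * ((k:ℝ) ^ j / j.factorial)) • ((T ^ j) f - (T ^ k) f)‖ ≤ u j := by
    intro j
    have hc0 : 0 ≤ Real.exp (-(k:ℝ)) * ((k:ℝ) ^ j / j.factorial) := by positivity
    rw [norm_smul, Real.norm_eq_abs, abs_of_nonneg hc0]
    calc Real.exp (-(k:ℝ)) * ((k:ℝ) ^ j / j.factorial) * ‖(T ^ j) f - (T ^ k) f‖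
        ≤ Real.exp (-(k:ℝ)) * ((k:ℝ) ^ j / j.factorial) *
            (|(j:ℝ) - k| * (M * E * q ^ j) * N) := by
          apply mul_le_mul_of_nonneg_left _ hc0
          exact chern_diffb T M ω n hM hω hn hT f k j
      _ = (C * Real.exp (-(k:ℝ)) * (lam ^ j / j.factorial)) * |(j:ℝ) - k| := by
          rw [hlamdef, mul_pow]
          ring
      _ ≤ (C * Real.exp (-(k:ℝ)) * (lam ^ j / j.factorial)) *
            (((j:ℝ) - k) ^ 2 / (2 * rs) + rs / 2) := by
          apply mul_le_mul_of_nonneg_left (chern_absle _ _ hrs)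
          have hlam0 : (0:ℝ) ≤ lam := by positivity
          positivity
      _ = u j := by
          rw [hudef]
          field_simp
  have hsumg : Summable (fun j : ℕ =>
      ‖(Real.exp (-(k:ℝ)) * ((k:ℝ) ^ j / j.factorial)) • ((T ^ j) f - (T ^ k) f)‖) :=
    Summable.of_nonneg_of_le (fun j => norm_nonneg _) hpt hsumu
  -- tsum of majorant
  have htsumu : ∑' j, u j = C * Real.exp (lam - (k:ℝ)) * rs := by
    rw [hudef, Summable.tsum_add ((chern_sumW lam k).mul_left _)
        ((Real.summable_pow_div_factorial lam).mul_left _),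
      tsum_mul_left, tsum_mul_left, chern_tsumW, chern_expser]
    have hlams : ((lam - k) ^ 2 + lam) = S := by rw [hlamdef, hSdef]; ring
    have hEE : Real.exp (lam - (k:ℝ)) = Real.exp (-(k:ℝ)) * Real.exp lam := by
      rw [← Real.exp_add]; ring_nf
    rw [hEE, hlams, ← hrsS]
    field_simp
    ring
  -- final calc
  calc ‖NormedSpace.exp ((k:ℝ) • (T - 1)) f - (T ^ k) f‖
      = ‖∑' j : ℕ, (Real.exp (-(k:ℝ)) * ((k:ℝ) ^ j / j.factorial)) •
          ((T ^ j) f - (T ^ k) f)‖ := by rw [hsplit]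
    _ ≤ ∑' j : ℕ, ‖(Real.exp (-(k:ℝ)) * ((k:ℝ) ^ j / j.factorial)) •
          ((T ^ j) f - (T ^ k) f)‖ := norm_tsum_le_tsum_norm hsumg
    _ ≤ ∑' j, u j := Summable.tsum_le_tsum hpt hsumg hsumu
    _ = C * Real.exp (lam - (k:ℝ)) * rs := htsumu
    _ = M * E * Real.exp ((k:ℝ) * (q - 1)) * rs * N := by
        rw [show lam - (k:ℝ) = (k:ℝ) * (q - 1) by rw [hlamdef]; ring, hCdef]
        ring
end

section
/- Let T be a contraction (‖T‖ ≤ 1) on a Banach space B. Then for every f ∈ B and k ∈ ℕ, ‖e^{k(T−I)} f − T^k f‖ ≤ √k · ‖(T−I) f‖. -/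
open scoped Nat

private lemma q_summable (k : ℕ) : Summable (fun j : ℕ => (k:ℝ)^j / j !) :=
  Real.summable_pow_div_factorial k

private lemma q_tsum (k : ℕ) : ∑' j : ℕ, (k:ℝ)^j / j ! = Real.exp k := by
  rw [Real.exp_eq_exp_ℝ, NormedSpace.exp_eq_tsum_div]

private lemma h1_shift (k : ℕ) (j : ℕ) :
    ((j:ℝ)+1) * (k:ℝ)^(j+1) / (j+1)! = (k:ℝ) * ((k:ℝ)^j / j !) := by
  rw [Nat.factorial_succ]
  push_cast
  rw [pow_succ]
  have h0 : ((j:ℝ) + 1) ≠ 0 := by positivity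
  have h1 : (j ! : ℝ) ≠ 0 := by exact_mod_cast j.factorial_ne_zero
  field_simp

private lemma h1_summable (k : ℕ) : Summable (fun j : ℕ => (j:ℝ) * ((k:ℝ)^j / j !)) := by
  rw [← summable_nat_add_iff 1]
  have : (fun j : ℕ => ((j+1:ℕ):ℝ) * ((k:ℝ)^(j+1) / (j+1)!)) =
      fun j : ℕ => (k:ℝ) * ((k:ℝ)^j / j !) := by
    funext j
    push_cast
    rw [← h1_shift k j, mul_div_assoc]
  rw [this]
  exact (q_summable k).mul_left _

private lemma h1_tsum (k : ℕ) : ∑' j : ℕ, (j:ℝ) * ((k:ℝ)^j / j !) = k * Real.exp k := by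
  rw [Summable.tsum_eq_zero_add (h1_summable k)]
  simp only [Nat.cast_zero, zero_mul, zero_add]
  have : (fun j : ℕ => ((j+1:ℕ):ℝ) * ((k:ℝ)^(j+1) / (j+1)!)) =
      fun j : ℕ => (k:ℝ) * ((k:ℝ)^j / j !) := by
    funext j
    push_cast
    rw [← h1_shift k j, mul_div_assoc]
  push_cast
  rw [show (fun j : ℕ => ((j:ℝ)+1) * ((k:ℝ)^(j+1) / ((j+1)! : ℕ))) =
      fun j : ℕ => (k:ℝ) * ((k:ℝ)^j / j !) by
    funext j; rw [← h1_shift k j, mul_div_assoc]]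
  rw [tsum_mul_left, q_tsum]

private lemma h2_shift (k : ℕ) (j : ℕ) :
    ((j:ℝ)+2) * (((j:ℝ)+1) * ((k:ℝ)^(j+2) / (j+2)!)) = (k:ℝ)^2 * ((k:ℝ)^j / j !) := by
  rw [Nat.factorial_succ, Nat.factorial_succ]
  push_cast
  rw [pow_succ, pow_succ]
  have h0 : ((j:ℝ) + 1) ≠ 0 := by positivity
  have h0' : ((j:ℝ) + 1 + 1) ≠ 0 := by positivity
  have h1 : (j ! : ℝ) ≠ 0 := by exact_mod_cast j.factorial_ne_zero
  field_simp
  ring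

private lemma h2_fun (k : ℕ) : (fun j : ℕ => ((j:ℝ)+2) * (((j:ℝ)+2)-1) * ((k:ℝ)^(j+2) / (j+2)!)) =
    fun j : ℕ => (k:ℝ)^2 * ((k:ℝ)^j / j !) := by
  funext j
  rw [← h2_shift k j]
  ring

private lemma h2_summable (k : ℕ) :
    Summable (fun j : ℕ => (j:ℝ) * ((j:ℝ)-1) * ((k:ℝ)^j / j !)) := by
  rw [← summable_nat_add_iff 2]
  have : (fun j : ℕ => ((j+2:ℕ):ℝ) * (((j+2:ℕ):ℝ)-1) * ((k:ℝ)^(j+2) / (j+2)!)) =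
      fun j : ℕ => (k:ℝ)^2 * ((k:ℝ)^j / j !) := by
    push_cast; exact h2_fun k
  rw [this]
  exact (q_summable k).mul_left _

private lemma h2_tsum (k : ℕ) :
    ∑' j : ℕ, (j:ℝ) * ((j:ℝ)-1) * ((k:ℝ)^j / j !) = (k:ℝ)^2 * Real.exp k := by
  have hs := h2_summable k
  rw [Summable.tsum_eq_zero_add hs]
  rw [Summable.tsum_eq_zero_add ((summable_nat_add_iff 1).mpr hs)]
  push_cast
  simp only [zero_mul, mul_zero, zero_add]
  norm_num
  rw [show (fun b : ℕ => ((b:ℝ)+1+1) * ((b:ℝ)+1) * ((k:ℝ)^(b+1+1) / ((b+1+1)! : ℕ))) =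
      fun j : ℕ => (k:ℝ)^2 * ((k:ℝ)^j / j !) by
    funext j
    have h := h2_shift k j
    rw [show j+1+1 = j+2 from rfl, ← h]
    ring]
  rw [tsum_mul_left, q_tsum]

private lemma var_decomp (k : ℕ) : (fun j : ℕ => ((k:ℝ)^j / j !) * ((j:ℝ)-k)^2) =
    fun j : ℕ => (j:ℝ) * ((j:ℝ)-1) * ((k:ℝ)^j / j !)
      + ((1 - 2*(k:ℝ)) * ((j:ℝ) * ((k:ℝ)^j / j !)) + (k:ℝ)^2 * ((k:ℝ)^j / j !)) := by
  funext j; ring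

private lemma var_summable (k : ℕ) :
    Summable (fun j : ℕ => ((k:ℝ)^j / j !) * ((j:ℝ)-k)^2) := by
  rw [var_decomp]
  exact (h2_summable k).add (((h1_summable k).mul_left _).add ((q_summable k).mul_left _))

private lemma var_tsum (k : ℕ) :
    ∑' j : ℕ, ((k:ℝ)^j / j !) * ((j:ℝ)-k)^2 = (k:ℝ) * Real.exp k := by
  have e1 := (h2_summable k)
  have e2 := (h1_summable k).mul_left (1 - 2*(k:ℝ))
  have e3 := (q_summable k).mul_left ((k:ℝ)^2)
  calc ∑' j : ℕ, ((k:ℝ)^j / j !) * ((j:ℝ)-k)^2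
      = ∑' j : ℕ, ((j:ℝ) * ((j:ℝ)-1) * ((k:ℝ)^j / j !)
        + ((1 - 2*(k:ℝ)) * ((j:ℝ) * ((k:ℝ)^j / j !)) + (k:ℝ)^2 * ((k:ℝ)^j / j !))) := by
        rw [var_decomp]
    _ = (k:ℝ)^2 * Real.exp k + ((1 - 2*(k:ℝ)) * ((k:ℝ) * Real.exp k) + (k:ℝ)^2 * Real.exp k) := by
        rw [Summable.tsum_add e1 (e2.add e3), Summable.tsum_add e2 e3, h2_tsum, tsum_mul_left, tsum_mul_left,
          h1_tsum, q_tsum]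
    _ = (k:ℝ) * Real.exp k := by ring

private lemma abs_summable (k : ℕ) :
    Summable (fun j : ℕ => ((k:ℝ)^j / j !) * |(j:ℝ)-k|) := by
  refine Summable.of_nonneg_of_le (f := fun j : ℕ => ((k:ℝ)^j / j !) * ((j:ℝ)-k)^2 + (k:ℝ)^j / j !)
    (fun j => by positivity) ?_ ?_
  · intro j
    have hq : (0:ℝ) ≤ (k:ℝ)^j / j ! := by positivity
    have habs : |(j:ℝ)-k| ≤ ((j:ℝ)-k)^2 + 1 := by
      nlinarith [abs_nonneg ((j:ℝ)-k), sq_abs ((j:ℝ)-k), sq_nonneg (|(j:ℝ)-k| - 1)]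
    calc ((k:ℝ)^j / j !) * |(j:ℝ)-k| ≤ ((k:ℝ)^j / j !) * (((j:ℝ)-k)^2 + 1) := by
          exact mul_le_mul_of_nonneg_left habs hq
      _ = ((k:ℝ)^j / j !) * ((j:ℝ)-k)^2 + (k:ℝ)^j / j ! := by ring
  · exact (var_summable k).add (q_summable k)

private lemma abs_moment_bound (k : ℕ) :
    ∑' j : ℕ, ((k:ℝ)^j / j !) * |(j:ℝ)-k| ≤ Real.sqrt k * Real.exp k := by
  apply Summable.tsum_le_of_sum_le (abs_summable k)
  intro s
  have key : ∑ j ∈ s, ((k:ℝ)^j / j !) * |(j:ℝ)-k|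
      ≤ Real.sqrt (∑ j ∈ s, (k:ℝ)^j / j !)
        * Real.sqrt (∑ j ∈ s, ((k:ℝ)^j / j !) * ((j:ℝ)-k)^2) := by
    have := Real.sum_sqrt_mul_sqrt_le s (f := fun j : ℕ => (k:ℝ)^j / j !)
      (g := fun j : ℕ => ((k:ℝ)^j / j !) * ((j:ℝ)-k)^2)
      (fun j => by positivity) (fun j => by positivity)
    refine le_trans (le_of_eq ?_) this
    apply Finset.sum_congr rfl
    intro j _
    rw [← Real.sqrt_mul (by positivity)]
    rw [show ((k:ℝ)^j / j !) * (((k:ℝ)^j / j !) * ((j:ℝ)-k)^2)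
        = (((k:ℝ)^j / j !) * |(j:ℝ)-k|)^2 by rw [← sq_abs ((j:ℝ)-k)]; ring]
    rw [Real.sqrt_sq (by positivity)]
  refine key.trans ?_
  have b1 : ∑ j ∈ s, (k:ℝ)^j / j ! ≤ Real.exp k := by
    rw [← q_tsum k]; exact Summable.sum_le_tsum s (fun j _ => by positivity) (q_summable k)
  have b2 : ∑ j ∈ s, ((k:ℝ)^j / j !) * ((j:ℝ)-k)^2 ≤ (k:ℝ) * Real.exp k := by
    rw [← var_tsum k]; exact Summable.sum_le_tsum s (fun j _ => by positivity) (var_summable k)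
  calc Real.sqrt (∑ j ∈ s, (k:ℝ)^j / j !)
        * Real.sqrt (∑ j ∈ s, ((k:ℝ)^j / j !) * ((j:ℝ)-k)^2)
      ≤ Real.sqrt (Real.exp k) * Real.sqrt ((k:ℝ) * Real.exp k) := by
        exact mul_le_mul (Real.sqrt_le_sqrt b1) (Real.sqrt_le_sqrt b2)
          (Real.sqrt_nonneg _) (Real.sqrt_nonneg _)
    _ = Real.sqrt k * Real.exp k := by
        rw [Real.sqrt_mul (by positivity), ← mul_assoc, mul_comm (Real.sqrt (Real.exp _)),
          mul_assoc, Real.mul_self_sqrt (Real.exp_nonneg _)]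

section Op
variable {B : Type*} [NormedAddCommGroup B] [NormedSpace ℝ B] [CompleteSpace B]

private lemma pow_contraction (T : B →L[ℝ] B) (hT : ‖T‖ ≤ 1) (n : ℕ) (x : B) :
    ‖(T ^ n) x‖ ≤ ‖x‖ := by
  induction n with
  | zero => simp
  | succ n ih =>
    rw [pow_succ', ContinuousLinearMap.mul_apply]
    calc ‖T ((T ^ n) x)‖ ≤ ‖T‖ * ‖(T ^ n) x‖ := T.le_opNorm _
      _ ≤ 1 * ‖x‖ := mul_le_mul hT ih (norm_nonneg _) zero_le_one
      _ = ‖x‖ := one_mul _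

private lemma pow_sub_self (T : B →L[ℝ] B) (hT : ‖T‖ ≤ 1) (d : ℕ) (f : B) :
    ‖(T ^ d) f - f‖ ≤ d * ‖(T - 1) f‖ := by
  induction d with
  | zero => simp
  | succ d ih =>
    have key : (T ^ (d+1)) f - f = (T ^ d) ((T - 1) f) + ((T ^ d) f - f) := by
      rw [pow_succ, ContinuousLinearMap.mul_apply, ContinuousLinearMap.sub_apply,
        map_sub, ContinuousLinearMap.one_apply]
      abel
    rw [key]
    calc ‖(T ^ d) ((T - 1) f) + ((T ^ d) f - f)‖
        ≤ ‖(T ^ d) ((T - 1) f)‖ + ‖(T ^ d) f - f‖ := norm_add_le _ _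
      _ ≤ ‖(T - 1) f‖ + d * ‖(T - 1) f‖ :=
          add_le_add (pow_contraction T hT d _) ih
      _ = (d + 1 : ℕ) * ‖(T - 1) f‖ := by push_cast; ring

private lemma pow_sub_pow (T : B →L[ℝ] B) (hT : ‖T‖ ≤ 1) (m n : ℕ) (f : B) :
    ‖(T ^ m) f - (T ^ n) f‖ ≤ |(m:ℝ) - n| * ‖(T - 1) f‖ := by
  wlog hmn : n ≤ m generalizing m n
  · rw [← neg_sub ((T ^ n) f), norm_neg, abs_sub_comm]
    exact this n m (le_of_not_ge hmn)
  obtain ⟨d, rfl⟩ := Nat.exists_eq_add_of_le hmn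
  have key : (T ^ (n + d)) f - (T ^ n) f = (T ^ n) ((T ^ d) f - f) := by
    rw [pow_add, ContinuousLinearMap.mul_apply, map_sub]
  rw [key]
  calc ‖(T ^ n) ((T ^ d) f - f)‖ ≤ ‖(T ^ d) f - f‖ := pow_contraction T hT n _
    _ ≤ d * ‖(T - 1) f‖ := pow_sub_self T hT d f
    _ = |((n + d : ℕ):ℝ) - n| * ‖(T - 1) f‖ := by
        congr 1
        push_cast
        rw [show ((n:ℝ) + d) - n = (d:ℝ) by ring, abs_of_nonneg (by positivity)]

end Op

open scoped Nat

section Op2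
set_option synthInstance.maxHeartbeats 1000000
variable {B : Type*} [NormedAddCommGroup B] [NormedSpace ℝ B] [CompleteSpace B]

private lemma pow_opnorm_le (T : B →L[ℝ] B) (hT : ‖T‖ ≤ 1) (n : ℕ) : ‖T ^ n‖ ≤ 1 :=
  ContinuousLinearMap.opNorm_le_bound _ zero_le_one
    (fun x => by rw [one_mul]; exact pow_contraction T hT n x)

private lemma op_series_summable (T : B →L[ℝ] B) (hT : ‖T‖ ≤ 1) (k : ℕ) :
    Summable (fun n : ℕ => ((k:ℝ)^n / n !) • (T ^ n)) := by
  apply Summable.of_norm_bounded (g := fun n : ℕ => (k:ℝ)^n / n !)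
    (Real.summable_pow_div_factorial k)
  intro n
  rw [norm_smul ((k:ℝ)^n / n !) (T ^ n), Real.norm_eq_abs, abs_of_nonneg (by positivity)]
  nth_rewrite 2 [← mul_one ((k:ℝ)^n / n !)]
  exact mul_le_mul_of_nonneg_left (pow_opnorm_le T hT n) (by positivity)

private lemma exp_apply_eq (T : B →L[ℝ] B) (hT : ‖T‖ ≤ 1) (f : B) (k : ℕ) :
    NormedSpace.exp ((k : ℝ) • (T - 1)) f
      = ∑' j : ℕ, (Real.exp (-(k:ℝ)) * ((k:ℝ)^j / j !)) • (T ^ j) f := by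
  have hsplit : (k:ℝ) • (T - 1) = (k:ℝ) • T + (-(k:ℝ)) • (1 : B →L[ℝ] B) := by
    rw [smul_sub, neg_smul, sub_eq_add_neg]
  have hcomm : Commute ((k:ℝ) • T) ((-(k:ℝ)) • (1 : B →L[ℝ] B)) :=
    ((Commute.one_right T).smul_left _).smul_right _
  have h1 : NormedSpace.exp ((-(k:ℝ)) • (1 : B →L[ℝ] B))
      = Real.exp (-(k:ℝ)) • (1 : B →L[ℝ] B) := by
    rw [← Algebra.algebraMap_eq_smul_one, ← NormedSpace.algebraMap_exp_comm,
      ← Real.exp_eq_exp_ℝ, Algebra.algebraMap_eq_smul_one]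
  have h2 : NormedSpace.exp ((k:ℝ) • T) = ∑' n : ℕ, ((k:ℝ)^n / n !) • (T ^ n) := by
    rw [NormedSpace.exp_eq_tsum ℝ]
    exact tsum_congr fun n => by rw [smul_pow, smul_smul, div_eq_inv_mul]
  have hsum := op_series_summable T hT k
  have h3 : (∑' n : ℕ, ((k:ℝ)^n / n !) • (T ^ n)) f
      = ∑' n : ℕ, (((k:ℝ)^n / n !) • (T ^ n)) f :=
    ContinuousLinearMap.map_tsum (ContinuousLinearMap.apply ℝ B f) hsum
  have hsum' : Summable (fun n : ℕ => (((k:ℝ)^n / n !) • (T ^ n)) f) :=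
    hsum.mapL (ContinuousLinearMap.apply ℝ B f)
  rw [hsplit, NormedSpace.exp_add_of_commute_of_mem_ball (𝕂 := ℝ) hcomm
      ((NormedSpace.expSeries_radius_eq_top ℝ (B →L[ℝ] B)).symm ▸ edist_lt_top _ _)
      ((NormedSpace.expSeries_radius_eq_top ℝ (B →L[ℝ] B)).symm ▸ edist_lt_top _ _), h1, h2, mul_smul_comm, mul_one,
    ContinuousLinearMap.smul_apply, h3, ← Summable.tsum_const_smul _ hsum']
  exact tsum_congr fun n => by
    rw [ContinuousLinearMap.smul_apply, smul_smul]

end Op2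

theorem chernoff_sqrt_lemma
    (B : Type*) [NormedAddCommGroup B] [NormedSpace ℝ B] [CompleteSpace B]
    (T : B →L[ℝ] B) (hT : ‖T‖ ≤ 1) :
    ∀ (f : B) (k : ℕ),
      ‖NormedSpace.exp ((k : ℝ) • (T - 1)) f - (T ^ k) f‖ ≤ Real.sqrt k * ‖(T - 1) f‖ := by
  intro f k
  set c : ℕ → ℝ := fun j => Real.exp (-(k:ℝ)) * ((k:ℝ)^j / j !) with hc
  have hc_nonneg : ∀ j, 0 ≤ c j := fun j => by positivity
  have hc_summable : Summable c := (q_summable k).mul_left _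
  have hc_tsum : ∑' j, c j = 1 := by
    rw [hc]
    rw [tsum_mul_left, q_tsum, Real.exp_neg, inv_mul_cancel₀ (Real.exp_ne_zero _)]
  -- summability of vector series
  have hsum' : Summable (fun j : ℕ => (((k:ℝ)^j / j !) • (T ^ j)) f) :=
    (op_series_summable T hT k).mapL (ContinuousLinearMap.apply ℝ B f)
  have hsumv : Summable (fun j : ℕ => c j • (T ^ j) f) := by
    have : (fun j : ℕ => c j • (T ^ j) f)
        = fun j : ℕ => Real.exp (-(k:ℝ)) • ((((k:ℝ)^j / j !) • (T ^ j)) f) := by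
      funext j
      rw [ContinuousLinearMap.smul_apply, smul_smul]
    rw [this]
    exact hsum'.const_smul _
  have hsumw : Summable (fun j : ℕ => c j • (T ^ k) f) := hc_summable.smul_const _
  -- rewrite the difference as a single tsum
  have hdiff : NormedSpace.exp ((k : ℝ) • (T - 1)) f - (T ^ k) f
      = ∑' j : ℕ, c j • ((T ^ j) f - (T ^ k) f) := by
    have h1 : (T ^ k) f = ∑' j : ℕ, c j • (T ^ k) f := by
      rw [Summable.tsum_smul_const hc_summable, hc_tsum, one_smul]
    rw [exp_apply_eq T hT f k]
    rw [show (fun j : ℕ => (Real.exp (-(k:ℝ)) * ((k:ℝ)^j / j !)) • (T ^ j) f)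
        = fun j : ℕ => c j • (T ^ j) f from rfl]
    rw [show (∑' j : ℕ, c j • (T ^ j) f) - (T ^ k) f
        = (∑' j : ℕ, c j • (T ^ j) f) - ∑' j : ℕ, c j • (T ^ k) f by rw [← h1]]
    rw [← Summable.tsum_sub hsumv hsumw]
    exact tsum_congr fun j => by rw [← smul_sub]
  rw [hdiff]
  -- bound the tsum by norms
  have hterm : ∀ j : ℕ, ‖c j • ((T ^ j) f - (T ^ k) f)‖
      ≤ Real.exp (-(k:ℝ)) * (((k:ℝ)^j / j !) * |(j:ℝ)-k|) * ‖(T - 1) f‖ := by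
    intro j
    rw [norm_smul, Real.norm_eq_abs, abs_of_nonneg (hc_nonneg j)]
    calc c j * ‖(T ^ j) f - (T ^ k) f‖
        ≤ c j * (|(j:ℝ)-k| * ‖(T - 1) f‖) :=
          mul_le_mul_of_nonneg_left (pow_sub_pow T hT j k f) (hc_nonneg j)
      _ = Real.exp (-(k:ℝ)) * (((k:ℝ)^j / j !) * |(j:ℝ)-k|) * ‖(T - 1) f‖ := by
          rw [hc]; ring
  have hgsum : Summable (fun j : ℕ =>
      Real.exp (-(k:ℝ)) * (((k:ℝ)^j / j !) * |(j:ℝ)-k|) * ‖(T - 1) f‖) :=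
    ((abs_summable k).mul_left _).mul_right _
  have hnorm := tsum_of_norm_bounded hgsum.hasSum hterm
  refine hnorm.trans ?_
  rw [tsum_mul_right, tsum_mul_left]
  have : Real.exp (-(k:ℝ)) * (∑' j : ℕ, ((k:ℝ)^j / j !) * |(j:ℝ)-k|)
      ≤ Real.sqrt k := by
    calc Real.exp (-(k:ℝ)) * (∑' j : ℕ, ((k:ℝ)^j / j !) * |(j:ℝ)-k|)
        ≤ Real.exp (-(k:ℝ)) * (Real.sqrt k * Real.exp k) :=
          mul_le_mul_of_nonneg_left (abs_moment_bound k) (Real.exp_nonneg _)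
      _ = Real.sqrt k := by
          rw [Real.exp_neg]
          field_simp
  exact mul_le_mul_of_nonneg_right this (norm_nonneg _)
end
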